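/- The set AC = {F ∈ C(I) : F is AC on [0,1]} of absolutely continuous functions is Π⁰₃-complete: AC is a countable intersection of Fσ subsets of C(I), and for every set B ⊆ ℕ^ℕ that is a countable intersection of Fσ sets, there is a continuous map g : ℕ^ℕ → C(I) with g⁻¹(AC) = B. -/

import Mathlib

open Set MeasureTheory Topology

noncomputable section

/-- `C(I)`: continuous real-valued functions on the unit interval. -/
abbrev CI := C(unitInterval, ℝ)

/-- Oscillation of `F` on the open interval `(a,b)`: `sup_{x,y ∈ (a,b)} |F x - F y|`. -/
noncomputable def osc (F : CI) (a b : unitInterval) : ℝ :=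
  sSup {r : ℝ | ∃ x ∈ Set.Ioo a b, ∃ y ∈ Set.Ioo a b, r = |F x - F y|}

/-- `a₀ ≤ b₀ ≤ a₁ ≤ b₁ ≤ … ≤ a_k ≤ b_k` is a finite non-decreasing sequence of points of `E`. -/
def SeqOn (E : Set unitInterval) (k : ℕ) (a b : ℕ → unitInterval) : Prop :=
  (∀ i ≤ k, a i ∈ E) ∧ (∀ i ≤ k, b i ∈ E) ∧ (∀ i ≤ k, a i ≤ b i) ∧ ∀ i < k, b i ≤ a (i + 1)

/-- `F` is VB on `E`. -/
def IsVBOn (F : CI) (E : Set unitInterval) : Prop :=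
  ∃ N : ℝ, ∀ (k : ℕ) (a b : ℕ → unitInterval), SeqOn E k a b →
    ∑ i ∈ Finset.range (k + 1), |F (b i) - F (a i)| < N

/-- `F` is VB_* on `E`. -/
def IsVBStarOn (F : CI) (E : Set unitInterval) : Prop :=
  ∃ N : ℝ, ∀ (k : ℕ) (a b : ℕ → unitInterval), SeqOn E k a b →
    ∑ i ∈ Finset.range (k + 1), osc F (a i) (b i) < N

/-- `F` is AC on `E`. -/
def IsACOn (F : CI) (E : Set unitInterval) : Prop :=
  ∀ ε : ℝ, 0 < ε → ∃ δ : ℝ, 0 < δ ∧ ∀ (k : ℕ) (a b : ℕ → unitInterval), SeqOn E k a b →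
    (∑ i ∈ Finset.range (k + 1), ((b i : ℝ) - (a i : ℝ))) < δ →
    ∑ i ∈ Finset.range (k + 1), |F (b i) - F (a i)| < ε

/-- `F` is AC_* on `E`. -/
def IsACStarOn (F : CI) (E : Set unitInterval) : Prop :=
  ∀ ε : ℝ, 0 < ε → ∃ δ : ℝ, 0 < δ ∧ ∀ (k : ℕ) (a b : ℕ → unitInterval), SeqOn E k a b →
    (∑ i ∈ Finset.range (k + 1), ((b i : ℝ) - (a i : ℝ))) < δ →
    ∑ i ∈ Finset.range (k + 1), osc F (a i) (b i) < ε

/-- `F ∈ VBG`. -/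
def IsVBG (F : CI) : Prop :=
  ∃ E : ℕ → Set unitInterval, (∀ n, IsClosed (E n)) ∧ (⋃ n, E n) = Set.univ ∧
    ∀ n, IsVBOn F (E n)

/-- `F ∈ VBG_*`. -/
def IsVBGStar (F : CI) : Prop :=
  ∃ E : ℕ → Set unitInterval, (∀ n, IsClosed (E n)) ∧ (⋃ n, E n) = Set.univ ∧
    ∀ n, IsVBStarOn F (E n)

/-- `F ∈ ACG`. -/
def IsACG (F : CI) : Prop :=
  ∃ E : ℕ → Set unitInterval, (∀ n, IsClosed (E n)) ∧ (⋃ n, E n) = Set.univ ∧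
    ∀ n, IsACOn F (E n)

/-- `F ∈ ACG_*`. -/
def IsACGStar (F : CI) : Prop :=
  ∃ E : ℕ → Set unitInterval, (∀ n, IsClosed (E n)) ∧ (⋃ n, E n) = Set.univ ∧
    ∀ n, IsACStarOn F (E n)

/-- `A` is Fσ: a countable union of closed sets. -/
def IsFSigma {X : Type*} [TopologicalSpace X] (A : Set X) : Prop :=
  ∃ C : ℕ → Set X, (∀ n, IsClosed (C n)) ∧ A = ⋃ n, C n

/-- `A` is a countable intersection of Fσ sets. -/
def IsPi03 {X : Type*} [TopologicalSpace X] (A : Set X) : Prop :=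
  ∃ C : ℕ → Set X, (∀ n, IsFSigma (C n)) ∧ A = ⋂ n, C n

open Set Topology Filter
open scoped Classical

namespace ACgadget

/-- clamp to [0,1] -/
def clamp (t : ℝ) : ℝ := max 0 (min 1 t)

lemma clamp_mono : Monotone clamp := fun _ _ h =>
  max_le_max le_rfl (min_le_min le_rfl h)

lemma clamp_of_nonpos {t : ℝ} (h : t ≤ 0) : clamp t = 0 := by
  unfold clamp
  rw [min_eq_right (h.trans zero_le_one), max_eq_left h]

lemma clamp_of_one_le {t : ℝ} (h : 1 ≤ t) : clamp t = 1 := by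
  unfold clamp
  rw [min_eq_left h, max_eq_right zero_le_one]

lemma clamp_lip (s t : ℝ) : |clamp t - clamp s| ≤ |t - s| := by
  have h1 : |max 0 (min 1 t) - max 0 (min 1 s)| ≤ |min 1 t - min 1 s| := by
    simpa [max_comm] using abs_max_sub_max_le_abs (min 1 t) (min 1 s) 0
  have h2 : |min 1 t - min 1 s| ≤ |t - s| := abs_min_sub_min_le_max _ _ _ _ |>.trans ?_
  · exact h1.trans h2
  · simp [abs_sub_comm]

/-- the split ratio: 3 when we refine, 2 when not. -/
def cval (p : Prop) : ℝ := if p then 3 else 2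

lemma two_le_cval (p : Prop) : 2 ≤ cval p := by
  unfold cval; split <;> norm_num

lemma cval_le_three (p : Prop) : cval p ≤ 3 := by
  unfold cval; split <;> norm_num

lemma cval_pos (p : Prop) : 0 < cval p := lt_of_lt_of_le two_pos (two_le_cval p)

/-- gluing operation -/
def glue (c : ℝ) (f : ℝ → ℝ) : ℝ → ℝ := fun t => (f (c * t) + f (c * t - (c - 1))) / 2

/-- good function predicate -/
structure Gd (f : ℝ → ℝ) : Prop where
  mono : Monotone f
  zero : ∀ t, t ≤ 0 → f t = 0
  one : ∀ t, 1 ≤ t → f t = 1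

lemma Gd.nonneg {f : ℝ → ℝ} (hf : Gd f) (t : ℝ) : 0 ≤ f t := by
  rw [← hf.zero 0 le_rfl]
  rcases le_total t 0 with h | h
  · rw [hf.zero t h, hf.zero 0 le_rfl]
  · exact hf.mono h

lemma Gd.le_one {f : ℝ → ℝ} (hf : Gd f) (t : ℝ) : f t ≤ 1 := by
  rcases le_total 1 t with h | h
  · rw [hf.one t h]
  · rw [← hf.one 1 le_rfl]; exact hf.mono h

lemma Gd.glue {f : ℝ → ℝ} (hf : Gd f) {c : ℝ} (h2 : 2 ≤ c) : Gd (glue c f) := by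
  have hc : 0 < c := lt_of_lt_of_le two_pos h2
  constructor
  · intro s t hst
    have h1 : c * s ≤ c * t := by nlinarith
    have h2' : c * s - (c - 1) ≤ c * t - (c - 1) := by linarith
    have := hf.mono h1
    have := hf.mono h2'
    unfold ACgadget.glue
    linarith
  · intro t ht
    have h1 : c * t ≤ 0 := mul_nonpos_of_nonneg_of_nonpos hc.le ht
    have h2' : c * t - (c - 1) ≤ 0 := by linarith
    unfold ACgadget.glue
    rw [hf.zero _ h1, hf.zero _ h2']; norm_num
  · intro t ht
    have h1 : 1 ≤ c * t := by nlinarith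
    have h2' : 1 ≤ c * t - (c - 1) := by nlinarith
    unfold ACgadget.glue
    rw [hf.one _ h1, hf.one _ h2']; norm_num

lemma Gd.clamp : Gd clamp :=
  ⟨clamp_mono, fun _ h => clamp_of_nonpos h, fun _ h => clamp_of_one_le h⟩

/-- contraction estimate for glue -/
lemma glue_dist {f g : ℝ → ℝ} (hf : Gd f) (hg : Gd g) {c M : ℝ} (h2 : 2 ≤ c)
    (hM : ∀ t, |f t - g t| ≤ M) (hM0 : 0 ≤ M) (t : ℝ) :
    |glue c f t - glue c g t| ≤ M / 2 := by
  have key : ∀ s : ℝ, s ≤ 0 ∨ 1 ≤ s → f s = g s := by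
    rintro s (h | h)
    · rw [hf.zero s h, hg.zero s h]
    · rw [hf.one s h, hg.one s h]
  have expand : glue c f t - glue c g t
      = ((f (c*t) - g (c*t)) + (f (c*t - (c-1)) - g (c*t - (c-1)))) / 2 := by
    unfold glue; ring
  rcases le_or_gt (c * t) 0 with h1 | h1
  · have e1 : f (c*t) = g (c*t) := key _ (Or.inl h1)
    have := hM (c*t - (c-1))
    rw [expand, e1]
    rw [abs_div]
    rw [abs_of_nonneg (by norm_num : (0:ℝ) ≤ 2)]
    have : |(g (c*t) - g (c*t)) + (f (c*t - (c-1)) - g (c*t - (c-1)))| ≤ M := by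
      simpa using hM (c*t - (c-1))
    linarith
  · rcases le_or_gt 1 (c * t - (c - 1)) with h2' | h2'
    · have e1 : f (c*t - (c-1)) = g (c*t - (c-1)) := key _ (Or.inr h2')
      rw [expand, e1]
      rw [abs_div, abs_of_nonneg (by norm_num : (0:ℝ) ≤ 2)]
      have : |(f (c*t) - g (c*t)) + (g (c*t - (c-1)) - g (c*t - (c-1)))| ≤ M := by
        simpa using hM (c*t)
      linarith
    · -- c*t > 0 and c*t - (c-1) < 1 : then one of them is outside (0,1)?
      -- if c*t ≥ 1 then f,g agree at c*t ... careful: need one agreement.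
      rcases le_or_gt 1 (c*t) with h3 | h3
      · -- c*t ≥ 1: agree at c*t
        have e1 : f (c*t) = g (c*t) := key _ (Or.inr h3)
        rw [expand, e1]
        rw [abs_div, abs_of_nonneg (by norm_num : (0:ℝ) ≤ 2)]
        have : |(g (c*t) - g (c*t)) + (f (c*t - (c-1)) - g (c*t - (c-1)))| ≤ M := by
          simpa using hM (c*t - (c-1))
        linarith
      · -- 0 < c*t < 1: then c*t - (c-1) < 1 - 1 = ... ≤ 0
        have h4 : c*t - (c-1) ≤ 0 := by linarith
        have e1 : f (c*t - (c-1)) = g (c*t - (c-1)) := key _ (Or.inl h4)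
        rw [expand, e1]
        rw [abs_div, abs_of_nonneg (by norm_num : (0:ℝ) ≤ 2)]
        have : |(f (c*t) - g (c*t)) + (g (c*t - (c-1)) - g (c*t - (c-1)))| ≤ M := by
          simpa using hM (c*t)
        linarith

/-- shift of a pattern -/
def shift (ρ : ℕ → Prop) : ℕ → Prop := fun k => ρ (k + 1)

/-- stage functions -/
def stage : ℕ → (ℕ → Prop) → ℝ → ℝ
  | 0, _ => clamp
  | (k+1), ρ => glue (cval (ρ 0)) (stage k (shift ρ))

lemma Gd.stage (k : ℕ) (ρ : ℕ → Prop) : Gd (stage k ρ) := by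
  induction k generalizing ρ with
  | zero => exact Gd.clamp
  | succ k ih => exact (ih (shift ρ)).glue (two_le_cval _)

lemma stage_succ_dist (k : ℕ) (ρ : ℕ → Prop) (t : ℝ) :
    |stage (k+1) ρ t - stage k ρ t| ≤ (1/2)^k := by
  induction k generalizing ρ t with
  | zero =>
    have h1 := (Gd.stage 1 ρ).nonneg t
    have h2 := (Gd.stage 1 ρ).le_one t
    have h3 := (Gd.stage 0 ρ).nonneg t
    have h4 := (Gd.stage 0 ρ).le_one t
    rw [abs_le]; constructor <;> simp_all <;> nlinarith
  | succ k ih =>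
    have : stage (k+2) ρ = glue (cval (ρ 0)) (stage (k+1) (shift ρ)) := rfl
    rw [this, show stage (k+1) ρ = glue (cval (ρ 0)) (stage k (shift ρ)) from rfl]
    have := glue_dist (Gd.stage (k+1) (shift ρ)) (Gd.stage k (shift ρ))
      (two_le_cval (ρ 0)) (fun s => ih (shift ρ) s) (by positivity) t
    calc |glue (cval (ρ 0)) (stage (k+1) (shift ρ)) t -
        glue (cval (ρ 0)) (stage k (shift ρ)) t| ≤ (1/2)^k / 2 := this
      _ = (1/2)^(k+1) := by ring

lemma summable_stage_diff (ρ : ℕ → Prop) (t : ℝ) :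
    Summable (fun k => stage (k+1) ρ t - stage k ρ t) := by
  apply Summable.of_norm_bounded (g := fun k => (1/2 : ℝ)^k)
    (summable_geometric_of_lt_one (by norm_num) (by norm_num))
  intro k
  simpa [Real.norm_eq_abs] using stage_succ_dist k ρ t

/-- the limit staircase function -/
def P (ρ : ℕ → Prop) (t : ℝ) : ℝ :=
  stage 0 ρ t + ∑' k, (stage (k+1) ρ t - stage k ρ t)

lemma tendsto_stage (ρ : ℕ → Prop) (t : ℝ) :
    Tendsto (fun K => stage K ρ t) atTop (𝓝 (P ρ t)) := by
  have h := (summable_stage_diff ρ t).hasSum.tendsto_sum_nat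
  have heq : ∀ K, ∑ k ∈ Finset.range K, (stage (k+1) ρ t - stage k ρ t)
      = stage K ρ t - stage 0 ρ t := fun K => Finset.sum_range_sub (fun k => stage k ρ t) K
  have h2 : Tendsto (fun K => stage K ρ t - stage 0 ρ t) atTop
      (𝓝 (∑' k, (stage (k+1) ρ t - stage k ρ t))) := by
    convert h using 1; ext K; rw [heq]
  have h3 := h2.add (tendsto_const_nhds (x := stage 0 ρ t))
  simpa [P, sub_add_cancel, add_comm] using h3

lemma P_gd (ρ : ℕ → Prop) : Gd (P ρ) := by
  constructor
  · intro s t hst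
    exact le_of_tendsto_of_tendsto' (tendsto_stage ρ s) (tendsto_stage ρ t)
      (fun K => (Gd.stage K ρ).mono hst)
  · intro t ht
    have : Tendsto (fun K : ℕ => (0:ℝ)) atTop (𝓝 (P ρ t)) := by
      have := tendsto_stage ρ t
      simpa [(Gd.stage _ ρ).zero t ht] using this
    exact tendsto_nhds_unique this tendsto_const_nhds |>.symm ▸ rfl
  · intro t ht
    have : Tendsto (fun K : ℕ => (1:ℝ)) atTop (𝓝 (P ρ t)) := by
      have := tendsto_stage ρ t
      simpa [(Gd.stage _ ρ).one t ht] using this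
    exact tendsto_nhds_unique this tendsto_const_nhds

/-- the functional equation -/
lemma P_funeq (ρ : ℕ → Prop) (t : ℝ) :
    P ρ t = (P (shift ρ) (cval (ρ 0) * t) + P (shift ρ) (cval (ρ 0) * t - (cval (ρ 0) - 1))) / 2 := by
  set c := cval (ρ 0)
  have h1 : Tendsto (fun K => stage (K+1) ρ t) atTop (𝓝 (P ρ t)) :=
    (tendsto_stage ρ t).comp (tendsto_add_atTop_nat 1)
  have h2 : Tendsto (fun K => (stage K (shift ρ) (c * t) + stage K (shift ρ) (c * t - (c - 1))) / 2)
      atTop (𝓝 ((P (shift ρ) (c*t) + P (shift ρ) (c*t - (c-1))) / 2)) :=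
    ((tendsto_stage (shift ρ) (c*t)).add (tendsto_stage (shift ρ) (c*t - (c-1)))).div_const 2
  have : (fun K => stage (K+1) ρ t)
      = fun K => (stage K (shift ρ) (c * t) + stage K (shift ρ) (c * t - (c - 1))) / 2 := by
    ext K; rfl
  rw [this] at h1
  exact tendsto_nhds_unique h1 h2

/-- stage functions depend only on the first k pattern values -/
lemma stage_congr (k : ℕ) (ρ ρ' : ℕ → Prop) (h : ∀ j < k, ρ j ↔ ρ' j) :
    stage k ρ = stage k ρ' := by
  induction k generalizing ρ ρ' with
  | zero => rfl
  | succ k ih =>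
    show glue (cval (ρ 0)) (stage k (shift ρ)) = glue (cval (ρ' 0)) (stage k (shift ρ'))
    rw [show cval (ρ 0) = cval (ρ' 0) by unfold cval; rw [propext (h 0 k.succ_pos)],
      ih (shift ρ) (shift ρ') (fun j hj => h (j+1) (by omega))]

/-- tail estimate -/
lemma P_stage_dist (K : ℕ) (ρ : ℕ → Prop) (t : ℝ) :
    |P ρ t - stage K ρ t| ≤ 2 * (1/2)^K := by
  have hM : ∀ M, |stage (K + M) ρ t - stage K ρ t| ≤ 2 * (1/2)^K := by
    intro M
    have step : |stage (K + M) ρ t - stage K ρ t| ≤ ∑ j ∈ Finset.range M, (1/2:ℝ)^(K+j) := by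
      induction M with
      | zero => simp
      | succ M ih =>
        calc |stage (K+(M+1)) ρ t - stage K ρ t|
            ≤ |stage (K+M+1) ρ t - stage (K+M) ρ t| + |stage (K+M) ρ t - stage K ρ t| := by
              rw [show K+(M+1) = K+M+1 by ring]; exact abs_sub_le _ _ _
          _ ≤ (1/2)^(K+M) + ∑ j ∈ Finset.range M, (1/2:ℝ)^(K+j) := by
              have := stage_succ_dist (K+M) ρ t; linarith
          _ = ∑ j ∈ Finset.range (M+1), (1/2:ℝ)^(K+j) := by
              rw [Finset.sum_range_succ]; ring
    refine step.trans ?_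
    have : ∑ j ∈ Finset.range M, (1/2:ℝ)^(K+j) = (1/2)^K * ∑ j ∈ Finset.range M, (1/2:ℝ)^j := by
      rw [Finset.mul_sum]; congr 1; ext j; rw [pow_add]
    rw [this]
    have hs : ∑ j ∈ Finset.range M, ((1:ℝ)/2)^j ≤ 2 := sum_geometric_two_le M
    nlinarith [pow_pos (by norm_num : (0:ℝ) < 1/2) K]
  have htend : Tendsto (fun M => |stage (K + M) ρ t - stage K ρ t|) atTop
      (𝓝 |P ρ t - stage K ρ t|) := by
    have h1 : Tendsto (fun M => stage (K + M) ρ t) atTop (𝓝 (P ρ t)) :=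
      (tendsto_stage ρ t).comp (by simpa [Function.comp, add_comm] using tendsto_add_atTop_nat K)
    exact ((h1.sub tendsto_const_nhds).abs)
  exact le_of_tendsto htend (Filter.Eventually.of_forall hM)

lemma P_congr_dist (K : ℕ) (ρ ρ' : ℕ → Prop) (h : ∀ j < K, ρ j ↔ ρ' j) (t : ℝ) :
    |P ρ t - P ρ' t| ≤ 4 * (1/2)^K := by
  have h1 := P_stage_dist K ρ t
  have h2 := P_stage_dist K ρ' t
  rw [stage_congr K ρ ρ' h] at h1
  calc |P ρ t - P ρ' t| ≤ |P ρ t - stage K ρ' t| + |stage K ρ' t - P ρ' t| := abs_sub_le _ _ _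
    _ ≤ 2*(1/2)^K + 2*(1/2)^K := by rw [abs_sub_comm (stage K ρ' t)]; linarith
    _ = 4 * (1/2)^K := by ring

lemma glue_two_clamp : glue 2 clamp = clamp := by
  ext t
  unfold glue
  rcases le_total t 0 with h | h
  · rw [clamp_of_nonpos h, clamp_of_nonpos (by linarith), clamp_of_nonpos (by linarith)]; norm_num
  rcases le_total t (1/2) with h1 | h1
  · have e1 : clamp (2*t) = 2*t := by
      unfold clamp; rw [min_eq_right (by linarith), max_eq_right (by linarith)]
    have e2 : clamp (2*t - (2-1)) = 0 := clamp_of_nonpos (by linarith)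
    have e3 : clamp t = t := by
      unfold clamp; rw [min_eq_right (by linarith), max_eq_right h]
    rw [e1, e2, e3]; ring
  rcases le_total t 1 with h2 | h2
  · have e1 : clamp (2*t) = 1 := clamp_of_one_le (by linarith)
    have e2 : clamp (2*t - (2-1)) = 2*t - 1 := by
      unfold clamp; rw [min_eq_right (by linarith), max_eq_right (by linarith)]; norm_num
    have e3 : clamp t = t := by
      unfold clamp; rw [min_eq_right h2, max_eq_right h]
    rw [e1, e2, e3]; ring
  · rw [clamp_of_one_le h2, clamp_of_one_le (by linarith), clamp_of_one_le (by linarith)]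
    norm_num

lemma cval_false {p : Prop} (hp : ¬ p) : cval p = 2 := if_neg hp

lemma stage_of_allFalse (ρ : ℕ → Prop) (h : ∀ j, ¬ ρ j) (k : ℕ) : stage k ρ = clamp := by
  induction k generalizing ρ with
  | zero => rfl
  | succ k ih =>
    show glue (cval (ρ 0)) (stage k (shift ρ)) = clamp
    rw [cval_false (h 0), ih (shift ρ) (fun j => h (j+1)), glue_two_clamp]

lemma P_of_eventually_false (ρ : ℕ → Prop) (k₀ : ℕ) (h : ∀ j, k₀ ≤ j → ¬ ρ j) :
    P ρ = stage k₀ ρ := by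
  induction k₀ generalizing ρ with
  | zero =>
    ext t
    have hst : ∀ k, stage k ρ t = clamp t := fun k => by
      rw [stage_of_allFalse ρ (fun j => h j (Nat.zero_le j)) k]
    have : Tendsto (fun K => stage K ρ t) atTop (𝓝 (clamp t)) := by
      simpa [hst] using (tendsto_const_nhds : Tendsto (fun _ : ℕ => clamp t) atTop _)
    exact tendsto_nhds_unique (tendsto_stage ρ t) this
  | succ k₀ ih =>
    ext t
    have hsh : P (shift ρ) = stage k₀ (shift ρ) :=
      ih (shift ρ) (fun j hj => h (j+1) (by omega))
    rw [P_funeq ρ t, hsh]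
    rfl

lemma avg_abs (A B C D : ℝ) : |(A+B)/2 - (C+D)/2| ≤ (|A-C| + |B-D|)/2 := by
  have h := abs_add_le (A-C) (B-D)
  have e : (A+B)/2 - (C+D)/2 = ((A-C)+(B-D))/2 := by ring
  rw [e, abs_div, abs_of_nonneg (by norm_num : (0:ℝ) ≤ 2)]
  linarith

lemma stage_lip (k : ℕ) (ρ : ℕ → Prop) (s t : ℝ) :
    |stage k ρ t - stage k ρ s| ≤ 3^k * |t - s| := by
  induction k generalizing ρ s t with
  | zero => simpa [stage] using clamp_lip s t
  | succ k ih =>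
    show |glue (cval (ρ 0)) (stage k (shift ρ)) t - glue (cval (ρ 0)) (stage k (shift ρ)) s|
      ≤ 3^(k+1) * |t - s|
    set c := cval (ρ 0)
    have hc0 : 0 < c := cval_pos _
    have hc3 : c ≤ 3 := cval_le_three _
    unfold glue
    have h1 := ih (shift ρ) (c*s) (c*t)
    have h2 := ih (shift ρ) (c*s - (c-1)) (c*t - (c-1))
    have e1 : |c*t - c*s| = c * |t - s| := by
      rw [← mul_sub, abs_mul, abs_of_pos hc0]
    have e2 : |(c*t - (c-1)) - (c*s - (c-1))| = c * |t - s| := by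
      rw [show (c*t - (c-1)) - (c*s - (c-1)) = c*(t-s) by ring, abs_mul, abs_of_pos hc0]
    rw [e1] at h1; rw [e2] at h2
    have habs : |(stage k (shift ρ) (c*t) + stage k (shift ρ) (c*t - (c-1))) / 2
        - (stage k (shift ρ) (c*s) + stage k (shift ρ) (c*s - (c-1))) / 2|
        ≤ (|stage k (shift ρ) (c*t) - stage k (shift ρ) (c*s)|
          + |stage k (shift ρ) (c*t - (c-1)) - stage k (shift ρ) (c*s - (c-1))|) / 2 :=
      avg_abs _ _ _ _
    refine habs.trans ?_
    have h3k : (0:ℝ) < 3^k := by positivity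
    have habs0 : (0:ℝ) ≤ |t - s| := abs_nonneg _
    calc (|stage k (shift ρ) (c*t) - stage k (shift ρ) (c*s)|
          + |stage k (shift ρ) (c*t - (c-1)) - stage k (shift ρ) (c*s - (c-1))|) / 2
        ≤ (3^k * (c * |t-s|) + 3^k * (c * |t-s|)) / 2 := by linarith
      _ = 3^k * c * |t - s| := by ring
      _ ≤ 3^(k+1) * |t - s| := by
          calc (3:ℝ)^k * c * |t-s| = 3^k*(c*|t-s|) := by ring
            _ ≤ 3^k*(3*|t-s|) :=
                mul_le_mul_of_nonneg_left (mul_le_mul_of_nonneg_right hc3 habs0) (le_of_lt h3k)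
            _ = 3^(k+1)*|t-s| := by ring

lemma stage_continuous (k : ℕ) (ρ : ℕ → Prop) : Continuous (stage k ρ) := by
  induction k generalizing ρ with
  | zero =>
    exact continuous_const.max (continuous_const.min continuous_id)
  | succ k ih =>
    show Continuous (glue (cval (ρ 0)) (stage k (shift ρ)))
    unfold glue
    exact (((ih (shift ρ)).comp (continuous_const.mul continuous_id)).add
      ((ih (shift ρ)).comp ((continuous_const.mul continuous_id).sub continuous_const))).div_const 2

lemma P_continuous (ρ : ℕ → Prop) : Continuous (P ρ) := by
  unfold P
  apply Continuous.add (stage_continuous 0 ρ)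
  apply continuous_tsum (fun k => ((stage_continuous (k+1) ρ).sub (stage_continuous k ρ)))
    (summable_geometric_of_lt_one (r := 1/2) (by norm_num) (by norm_num))
  intro k t
  simpa [Real.norm_eq_abs] using stage_succ_dist k ρ t

lemma P_left_cell (ρ : ℕ → Prop) {y : ℝ} (h0 : 0 ≤ y) (h1 : y ≤ 1) :
    P ρ (y / cval (ρ 0)) = P (shift ρ) y / 2 := by
  set c := cval (ρ 0)
  have hc : 0 < c := cval_pos _
  have hc2 : 2 ≤ c := two_le_cval _
  have e1 : c * (y / c) = y := by field_simp
  rw [P_funeq ρ (y / c), e1, (P_gd (shift ρ)).zero _ (show y - (c-1) ≤ 0 by linarith)]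
  ring

lemma P_right_cell (ρ : ℕ → Prop) {y : ℝ} (h0 : 0 ≤ y) (h1 : y ≤ 1) :
    P ρ ((y + cval (ρ 0) - 1) / cval (ρ 0)) = (1 + P (shift ρ) y) / 2 := by
  set c := cval (ρ 0)
  have hc : 0 < c := cval_pos _
  have hc2 : 2 ≤ c := two_le_cval _
  have e1 : c * ((y + c - 1) / c) = y + c - 1 := by field_simp
  rw [P_funeq ρ _, e1, (P_gd (shift ρ)).one _ (show 1 ≤ y + c - 1 by linarith),
    show y + c - 1 - (c - 1) = y by ring]

/-- the list of active cells at depth k -/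
def CellList : (ℕ → Prop) → ℕ → List (ℝ × ℝ)
  | _, 0 => [((0:ℝ), (1:ℝ))]
  | ρ, (k+1) =>
    ((CellList (shift ρ) k).map fun pr => (pr.1 / cval (ρ 0), pr.2 / cval (ρ 0))) ++
    ((CellList (shift ρ) k).map fun pr =>
      ((pr.1 + cval (ρ 0) - 1) / cval (ρ 0), (pr.2 + cval (ρ 0) - 1) / cval (ρ 0)))

lemma cells_ne_nil (ρ : ℕ → Prop) (k : ℕ) : CellList ρ k ≠ [] := by
  cases k with
  | zero => simp [CellList]
  | succ k =>
    simp only [CellList]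
    intro h
    rcases List.append_eq_nil_iff.mp h with ⟨h1, _⟩
    exact cells_ne_nil (shift ρ) k (List.map_eq_nil_iff.mp h1)

lemma cells_mem (ρ : ℕ → Prop) (k : ℕ) :
    ∀ pr ∈ CellList ρ k, 0 ≤ pr.1 ∧ pr.1 ≤ pr.2 ∧ pr.2 ≤ 1 := by
  induction k generalizing ρ with
  | zero => intro pr hpr; simp [CellList] at hpr; subst hpr; norm_num
  | succ k ih =>
    intro pr hpr
    set c := cval (ρ 0) with hcdef
    have hc : 0 < c := cval_pos _
    have hc2 : 2 ≤ c := two_le_cval _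
    simp only [CellList, List.mem_append, List.mem_map] at hpr
    rcases hpr with ⟨q, hq, rfl⟩ | ⟨q, hq, rfl⟩ <;> obtain ⟨hq0, hq1, hq2⟩ := ih (shift ρ) q hq
    · refine ⟨by positivity, ?_, ?_⟩
      · exact div_le_div_of_nonneg_right hq1 hc.le
      · rw [div_le_one hc]; linarith
    · constructor
      · apply div_nonneg (by linarith) hc.le
      constructor
      · exact div_le_div_of_nonneg_right (by linarith) hc.le
      · rw [div_le_one hc]; linarith

lemma list_sum_map_div {α : Type*} (l : List α) (f : α → ℝ) (c : ℝ) :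
    (l.map (fun x => f x / c)).sum = (l.map f).sum / c := by
  induction l with
  | nil => simp
  | cons a t ih => simp [ih, add_div]

lemma cells_pairwise (ρ : ℕ → Prop) (k : ℕ) :
    (CellList ρ k).Pairwise (fun p q => p.2 ≤ q.1) := by
  induction k generalizing ρ with
  | zero => simp [CellList]
  | succ k ih =>
    set c := cval (ρ 0)
    have hc : 0 < c := cval_pos _
    have hc2 : 2 ≤ c := two_le_cval _
    rw [CellList, List.pairwise_append]
    refine ⟨List.Pairwise.map _ ?_ (ih (shift ρ)), List.Pairwise.map _ ?_ (ih (shift ρ)), ?_⟩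
    · intro p q h
      exact div_le_div_of_nonneg_right h hc.le
    · intro p q h
      exact div_le_div_of_nonneg_right (by linarith) hc.le
    · intro p hp q hq
      simp only [List.mem_map] at hp hq
      obtain ⟨p', hp', rfl⟩ := hp
      obtain ⟨q', hq', rfl⟩ := hq
      obtain ⟨hp0, hp1, hp2⟩ := cells_mem (shift ρ) k p' hp'
      obtain ⟨hq0, hq1, hq2⟩ := cells_mem (shift ρ) k q' hq'
      show p'.2 / c ≤ (q'.1 + c - 1) / c
      exact div_le_div_of_nonneg_right (by linarith) hc.le

lemma cells_width (ρ : ℕ → Prop) (k : ℕ) :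
    ((CellList ρ k).map (fun pr => pr.2 - pr.1)).sum
      = ∏ j ∈ Finset.range k, (2 / cval (ρ j)) := by
  induction k generalizing ρ with
  | zero => simp [CellList]
  | succ k ih =>
    set c := cval (ρ 0) with hcdef
    have hc : 0 < c := cval_pos _
    rw [CellList, List.map_append, List.sum_append, List.map_map, List.map_map]
    have e1 : ((fun pr : ℝ × ℝ => pr.2 - pr.1) ∘ fun pr : ℝ × ℝ => (pr.1 / c, pr.2 / c))
        = fun pr : ℝ × ℝ => (pr.2 - pr.1) / c := by
      ext pr; simp [Function.comp]; ring
    have e2 : ((fun pr : ℝ × ℝ => pr.2 - pr.1) ∘ fun pr : ℝ × ℝ =>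
        ((pr.1 + c - 1) / c, (pr.2 + c - 1) / c)) = fun pr : ℝ × ℝ => (pr.2 - pr.1) / c := by
      ext pr; simp [Function.comp]; ring
    rw [e1, e2]
    have e3 := list_sum_map_div (CellList (shift ρ) k) (fun pr => pr.2 - pr.1) c
    simp only [e3, ih (shift ρ)]
    rw [Finset.prod_range_succ']
    show _ = (∏ j ∈ Finset.range k, 2 / cval (shift ρ j)) * (2 / c)
    field_simp
    ring

lemma cells_val (ρ : ℕ → Prop) (k : ℕ) :
    ((CellList ρ k).map (fun pr => P ρ pr.2 - P ρ pr.1)).sum = 1 := by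
  induction k generalizing ρ with
  | zero =>
    simp [CellList, (P_gd ρ).zero 0 le_rfl, (P_gd ρ).one 1 le_rfl]
  | succ k ih =>
    set c := cval (ρ 0) with hcdef
    have hc : 0 < c := cval_pos _
    rw [CellList, List.map_append, List.sum_append, List.map_map, List.map_map]
    have e1 : ∀ pr ∈ CellList (shift ρ) k,
        ((fun pr : ℝ × ℝ => P ρ pr.2 - P ρ pr.1) ∘ fun pr : ℝ × ℝ => (pr.1 / c, pr.2 / c)) pr
        = (fun pr : ℝ × ℝ => (P (shift ρ) pr.2 - P (shift ρ) pr.1) / 2) pr := by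
      intro pr hpr
      obtain ⟨h0, h1, h2⟩ := cells_mem (shift ρ) k pr hpr
      simp only [Function.comp]
      rw [P_left_cell ρ (by linarith) h2, P_left_cell ρ h0 (by linarith)]
      ring
    have e2 : ∀ pr ∈ CellList (shift ρ) k,
        ((fun pr : ℝ × ℝ => P ρ pr.2 - P ρ pr.1) ∘ fun pr : ℝ × ℝ =>
          ((pr.1 + c - 1) / c, (pr.2 + c - 1) / c)) pr
        = (fun pr : ℝ × ℝ => (P (shift ρ) pr.2 - P (shift ρ) pr.1) / 2) pr := by
      intro pr hpr
      obtain ⟨h0, h1, h2⟩ := cells_mem (shift ρ) k pr hpr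
      simp only [Function.comp]
      rw [P_right_cell ρ (by linarith) h2, P_right_cell ρ h0 (by linarith)]
      ring
    rw [List.map_congr_left e1, List.map_congr_left e2]
    rw [list_sum_map_div (CellList (shift ρ) k) (fun pr => P (shift ρ) pr.2 - P (shift ρ) pr.1) 2]
    rw [ih (shift ρ)]
    norm_num

/-- product of widths -/
def wprod (ρ : ℕ → Prop) (k : ℕ) : ℝ := ∏ j ∈ Finset.range k, (2 / cval (ρ j))

lemma wprod_pos (ρ : ℕ → Prop) (k : ℕ) : 0 < wprod ρ k :=
  Finset.prod_pos (fun j _ => div_pos two_pos (cval_pos _))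

lemma wprod_succ (ρ : ℕ → Prop) (k : ℕ) :
    wprod ρ (k+1) = wprod ρ k * (2 / cval (ρ k)) := Finset.prod_range_succ _ _

lemma wprod_anti (ρ : ℕ → Prop) {k k' : ℕ} (h : k ≤ k') : wprod ρ k' ≤ wprod ρ k := by
  induction k' with
  | zero => rw [Nat.le_zero.mp h]
  | succ k' ih =>
    rcases Nat.lt_or_ge k (k'+1) with h1 | h1
    · have h2 : k ≤ k' := by omega
      rw [wprod_succ]
      have hf : 2 / cval (ρ k') ≤ 1 := by
        rw [div_le_one (cval_pos _)]; exact two_le_cval _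
      nlinarith [wprod_pos ρ k', ih h2]
    · have : k = k' + 1 := by omega
      rw [this]

lemma wprod_small (ρ : ℕ → Prop) (h : ∀ K, ∃ k, K ≤ k ∧ ρ k) {δ : ℝ} (hδ : 0 < δ) :
    ∃ k, wprod ρ k < δ := by
  have key : ∀ N, ∃ k, wprod ρ k ≤ (2/3)^N := by
    intro N
    induction N with
    | zero => exact ⟨0, by simp [wprod]⟩
    | succ N ih =>
      obtain ⟨k, hk⟩ := ih
      obtain ⟨k', hk', hρ⟩ := h k
      refine ⟨k'+1, ?_⟩
      rw [wprod_succ, show cval (ρ k') = 3 from if_pos hρ]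
      calc wprod ρ k' * (2/3) ≤ wprod ρ k * (2/3) := by
            nlinarith [wprod_anti ρ hk']
        _ ≤ (2/3)^N * (2/3) := by nlinarith
        _ = (2/3)^(N+1) := by ring
  obtain ⟨N, hN⟩ := exists_pow_lt_of_lt_one hδ (by norm_num : (2:ℝ)/3 < 1)
  obtain ⟨k, hk⟩ := key N
  exact ⟨k, lt_of_le_of_lt hk hN⟩

lemma P_lip_of_eventually_false (ρ : ℕ → Prop) (k₀ : ℕ) (h : ∀ j, k₀ ≤ j → ¬ ρ j)
    (s t : ℝ) : |P ρ t - P ρ s| ≤ 3^k₀ * |t - s| := by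
  rw [P_of_eventually_false ρ k₀ h]
  exact stage_lip k₀ ρ s t

/-! ## combinatorics of the reduction -/

lemma nat_mono_bdd_eventually_const (f : ℕ → ℕ) (hmono : Monotone f) (M : ℕ)
    (hbdd : ∀ k, f k ≤ M) : ∃ K, ∀ k, K ≤ k → f k = f K := by
  have hne : (Set.range f).Nonempty := ⟨f 0, 0, rfl⟩
  have hb : BddAbove (Set.range f) := ⟨M, by rintro _ ⟨k, rfl⟩; exact hbdd k⟩
  obtain ⟨K, hK⟩ := Nat.sSup_mem hne hb
  refine ⟨K, fun k hk => ?_⟩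
  have h1 : f K ≤ f k := hmono hk
  have h2 : f k ≤ sSup (Set.range f) := le_csSup hb ⟨k, rfl⟩
  omega

section Reduction

variable (D : ℕ → ℕ → Set (ℕ → ℕ))

/-- consistency of x's first k values with level (n,m) -/
def Cons (n m k : ℕ) (x : ℕ → ℕ) : Prop := ∃ z ∈ D n m, ∀ j < k, z j = x j

/-- the set of levels consistent at time k -/
def Sstate (n k : ℕ) (x : ℕ → ℕ) : Set ℕ := {m | Cons D n m k x}

/-- the refinement pattern -/
def rho (n : ℕ) (x : ℕ → ℕ) (k : ℕ) : Prop :=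
  Sstate D n k x = ∅ ∨ Sstate D n k x ≠ Sstate D n (k+1) x

lemma Cons_antitone_k (n m : ℕ) (x : ℕ → ℕ) {k k' : ℕ} (h : k ≤ k')
    (hc : Cons D n m k' x) : Cons D n m k x := by
  obtain ⟨z, hz, hagree⟩ := hc
  exact ⟨z, hz, fun j hj => hagree j (lt_of_lt_of_le hj h)⟩

lemma Sstate_congr (n k : ℕ) (x x' : ℕ → ℕ) (h : ∀ j < k, x j = x' j) :
    Sstate D n k x = Sstate D n k x' := by
  ext m
  constructor <;> rintro ⟨z, hz, hagree⟩ <;> refine ⟨z, hz, fun j hj => ?_⟩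
  · rw [hagree j hj, h j hj]
  · rw [hagree j hj, ← h j hj]

lemma rho_congr (n k : ℕ) (x x' : ℕ → ℕ) (h : ∀ j ≤ k, x j = x' j) :
    rho D n x k ↔ rho D n x' k := by
  unfold rho
  rw [Sstate_congr D n k x x' (fun j hj => h j (by omega)),
    Sstate_congr D n (k+1) x x' (fun j hj => h j (by omega))]

/-- good case: if x is in level m₀ then the pattern is eventually false -/
lemma rho_eventually_false (hmono : ∀ n m, D n m ⊆ D n (m+1))
    (n : ℕ) (x : ℕ → ℕ) (m₀ : ℕ) (hx : x ∈ D n m₀) :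
    ∃ K, ∀ k, K ≤ k → ¬ rho D n x k := by
  have hmono' : ∀ n m m', m ≤ m' → D n m ⊆ D n m' := by
    intro n m m' h
    induction m' with
    | zero => rw [Nat.le_zero.mp h]
    | succ m' ih =>
      rcases Nat.lt_or_ge m (m'+1) with h1 | h1
      · exact (ih (by omega)).trans (hmono n m')
      · have : m = m' + 1 := by omega
        rw [this]
  have hm₀ : ∀ k, m₀ ∈ Sstate D n k x := fun k => ⟨x, hx, fun j _ => rfl⟩
  have hup : ∀ k m m', m ≤ m' → m ∈ Sstate D n k x → m' ∈ Sstate D n k x := by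
    rintro k m m' hmm ⟨z, hz, hagree⟩
    exact ⟨z, hmono' n m m' hmm hz, hagree⟩
  have hne : ∀ k, (Sstate D n k x).Nonempty := fun k => ⟨m₀, hm₀ k⟩
  set f : ℕ → ℕ := fun k => sInf (Sstate D n k x) with hf
  have hfmem : ∀ k, f k ∈ Sstate D n k x := fun k => Nat.sInf_mem (hne k)
  have hSf : ∀ k, Sstate D n k x = Set.Ici (f k) := by
    intro k
    ext m
    constructor
    · intro hm; exact Nat.sInf_le hm
    · intro hm; exact hup k (f k) m hm (hfmem k)
  have hfmono : Monotone f := by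
    apply monotone_nat_of_le_succ
    intro k
    apply Nat.sInf_le
    exact Cons_antitone_k D n (f (k+1)) x (Nat.le_succ k) (hfmem (k+1))
  have hfbdd : ∀ k, f k ≤ m₀ := fun k => Nat.sInf_le (hm₀ k)
  obtain ⟨K, hK⟩ := nat_mono_bdd_eventually_const f hfmono m₀ hfbdd
  refine ⟨K, fun k hk => ?_⟩
  unfold rho
  push_neg
  constructor
  · exact hne k
  · rw [hSf k, hSf (k+1), hK k hk, hK (k+1) (by omega)]

/-- bad case: if x is in no level then the pattern is true infinitely often -/
lemma rho_infinitely_true (hclosed : ∀ n m, IsClosed (D n m))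
    (n : ℕ) (x : ℕ → ℕ) (hx : ∀ m, x ∉ D n m) :
    ∀ K, ∃ k, K ≤ k ∧ rho D n x k := by
  intro K
  by_contra hcon
  push_neg at hcon
  -- Sstate is constant and nonempty from K on
  have hconst : ∀ k, K ≤ k → Sstate D n k x = Sstate D n K x := by
    intro k hk
    induction k with
    | zero => rw [Nat.le_zero.mp hk]
    | succ k ih =>
      rcases Nat.lt_or_ge K (k+1) with h1 | h1
      · have hKk : K ≤ k := by omega
        obtain h2 := hcon k hKk
        unfold rho at h2
        push_neg at h2
        rw [← h2.2, ih hKk]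
      · have : K = k + 1 := by omega
        rw [this]
  have hne : (Sstate D n K x).Nonempty := by
    obtain h2 := hcon K le_rfl
    unfold rho at h2
    push_neg at h2
    exact h2.1
  obtain ⟨m, hm⟩ := hne
  -- m is consistent at all times
  have hall : ∀ k, Cons D n m k x := by
    intro k
    rcases le_or_gt k K with h1 | h1
    · exact Cons_antitone_k D n m x h1 hm
    · have : m ∈ Sstate D n k x := by rw [hconst k h1.le]; exact hm
      exact this
  -- closedness: x ∈ D n m
  apply hx m
  -- build witnesses
  have hz : ∀ k, ∃ z ∈ D n m, ∀ j < k, z j = x j := hall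
  choose z hzD hzagree using hz
  have htend : Tendsto z atTop (𝓝 x) := by
    rw [tendsto_pi_nhds]
    intro j
    apply Tendsto.congr' _ (tendsto_const_nhds (x := x j))
    filter_upwards [eventually_ge_atTop (j+1)] with k hk
    exact (hzagree k j (by omega)).symm
  exact (hclosed n m).mem_of_tendsto htend (Eventually.of_forall hzD)

end Reduction

/-! ## the row functions and the sum -/

/-- left endpoint of the n-th interval -/
def lep (n : ℕ) : ℝ := 1 - (1/2)^n

/-- the n-th row function -/
def rowf (ρ : ℕ → Prop) (n : ℕ) (t : ℝ) : ℝ := (1/4)^n * P ρ ((t - lep n) * 2^(n+1))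

lemma rowf_mono (ρ : ℕ → Prop) (n : ℕ) : Monotone (rowf ρ n) := by
  intro s t hst
  unfold rowf
  have h1 : (s - lep n) * 2^(n+1) ≤ (t - lep n) * 2^(n+1) := by
    apply mul_le_mul_of_nonneg_right (by linarith) (by positivity)
  have h2 := (P_gd ρ).mono h1
  have h3 : (0:ℝ) ≤ (1/4)^n := by positivity
  nlinarith

lemma rowf_nonneg (ρ : ℕ → Prop) (n : ℕ) (t : ℝ) : 0 ≤ rowf ρ n t := by
  unfold rowf
  have := (P_gd ρ).nonneg ((t - lep n) * 2^(n+1))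
  positivity

lemma rowf_le (ρ : ℕ → Prop) (n : ℕ) (t : ℝ) : rowf ρ n t ≤ (1/4)^n := by
  unfold rowf
  have h1 := (P_gd ρ).le_one ((t - lep n) * 2^(n+1))
  have h3 : (0:ℝ) ≤ (1/4)^n := by positivity
  nlinarith

lemma rowf_continuous (ρ : ℕ → Prop) (n : ℕ) : Continuous (rowf ρ n) := by
  unfold rowf
  exact continuous_const.mul ((P_continuous ρ).comp
    ((continuous_id.sub continuous_const).mul continuous_const))

lemma rowf_psi (ρ : ℕ → Prop) (n : ℕ) (u : ℝ) :
    rowf ρ n (lep n + u * (1/2)^(n+1)) = (1/4)^n * P ρ u := by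
  unfold rowf
  congr 1
  congr 1
  have h : ((1:ℝ)/2)^(n+1) * 2^(n+1) = 1 := by
    rw [div_pow, one_pow]
    field_simp
  calc (lep n + u * (1/2)^(n+1) - lep n) * 2^(n+1)
      = u * ((1/2)^(n+1) * 2^(n+1)) := by ring
    _ = u := by rw [h, mul_one]

lemma rowf_dist (ρ ρ' : ℕ → Prop) (n K : ℕ) (h : ∀ j < K, ρ j ↔ ρ' j) (t : ℝ) :
    |rowf ρ n t - rowf ρ' n t| ≤ (1/4)^n * (4 * (1/2)^K) := by
  unfold rowf
  rw [← mul_sub, abs_mul, abs_of_nonneg (by positivity : (0:ℝ) ≤ (1/4)^n)]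
  exact mul_le_mul_of_nonneg_left (P_congr_dist K ρ ρ' h _) (by positivity)

lemma rowf_lip (ρ : ℕ → Prop) (n k₀ : ℕ) (h : ∀ j, k₀ ≤ j → ¬ ρ j) (s t : ℝ) :
    |rowf ρ n t - rowf ρ n s| ≤ ((1/4)^n * 3^k₀ * 2^(n+1)) * |t - s| := by
  unfold rowf
  rw [← mul_sub, abs_mul, abs_of_nonneg (by positivity : (0:ℝ) ≤ (1/4)^n)]
  have h1 := P_lip_of_eventually_false ρ k₀ h ((s - lep n) * 2^(n+1)) ((t - lep n) * 2^(n+1))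
  have h2 : |(t - lep n) * 2^(n+1) - (s - lep n) * 2^(n+1)| = 2^(n+1) * |t - s| := by
    rw [show (t - lep n) * 2^(n+1) - (s - lep n) * 2^(n+1) = 2^(n+1) * (t - s) by ring,
      abs_mul, abs_of_pos (by positivity : (0:ℝ) < 2^(n+1))]
  rw [h2] at h1
  calc (1/4:ℝ)^n * |P ρ ((t - lep n) * 2^(n+1)) - P ρ ((s - lep n) * 2^(n+1))|
      ≤ (1/4)^n * (3^k₀ * (2^(n+1) * |t - s|)) :=
        mul_le_mul_of_nonneg_left h1 (by positivity)
    _ = ((1/4)^n * 3^k₀ * 2^(n+1)) * |t - s| := by ring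

/-- summability of the rows at a point -/
lemma summable_rowf (σ : ℕ → ℕ → Prop) (t : ℝ) : Summable (fun n => rowf (σ n) n t) := by
  apply Summable.of_nonneg_of_le (fun n => rowf_nonneg _ _ _) (fun n => rowf_le _ _ _)
  exact summable_geometric_of_lt_one (by norm_num) (by norm_num)

/-- the total function -/
def Gfun (σ : ℕ → ℕ → Prop) (t : ℝ) : ℝ := ∑' n, rowf (σ n) n t

lemma Gfun_mono (σ : ℕ → ℕ → Prop) : Monotone (Gfun σ) := fun s t hst =>
  Summable.tsum_le_tsum (fun n => rowf_mono (σ n) n hst) (summable_rowf σ s) (summable_rowf σ t)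

lemma Gfun_continuous (σ : ℕ → ℕ → Prop) : Continuous (Gfun σ) := by
  apply continuous_tsum (fun n => rowf_continuous (σ n) n)
    (summable_geometric_of_lt_one (r := 1/4) (by norm_num) (by norm_num))
  intro n t
  rw [Real.norm_eq_abs, abs_of_nonneg (rowf_nonneg _ _ _)]
  exact rowf_le _ _ _

/-- the bundled continuous map on the unit interval -/
def GC (σ : ℕ → ℕ → Prop) : CI :=
  ⟨fun t => Gfun σ (t : ℝ), (Gfun_continuous σ).comp continuous_subtype_val⟩

lemma GC_sub_eq (σ : ℕ → ℕ → Prop) (s t : unitInterval) :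
    GC σ t - GC σ s = ∑' n, (rowf (σ n) n t - rowf (σ n) n s) :=
  (Summable.tsum_sub (summable_rowf σ (t:ℝ)) (summable_rowf σ (s:ℝ))).symm

/-- telescoping bound for monotone functions over an ordered system -/
lemma sum_incr_le (f : ℝ → ℝ) (hf : Monotone f) (k : ℕ) (A B : ℕ → ℝ)
    (hab : ∀ i ≤ k, A i ≤ B i) (hba : ∀ i < k, B i ≤ A (i+1)) :
    ∑ i ∈ Finset.range (k+1), (f (B i) - f (A i)) ≤ f (B k) - f (A 0) := by
  induction k with
  | zero => simp
  | succ k ih =>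
    rw [Finset.sum_range_succ]
    have h1 := ih (fun i hi => hab i (by omega)) (fun i hi => hba i (by omega))
    have h2 : f (B k) ≤ f (A (k+1)) := hf (hba k (by omega))
    linarith

lemma list_sum_eq_range {α : Type*} (d : α) (l : List α) (f : α → ℝ) :
    (l.map f).sum = ∑ i ∈ Finset.range l.length, f (l.getD i d) := by
  induction l with
  | nil => simp
  | cons x t ih =>
    rw [List.map_cons, List.sum_cons, List.length_cons, Finset.sum_range_succ', ih]
    simp [List.getD_cons_succ, List.getD_cons_zero, add_comm]

/-- the good case: all rows eventually stop refining, so `GC σ` is absolutely continuous -/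
lemma isACOn_GC (σ : ℕ → ℕ → Prop) (hgood : ∀ n, ∃ k₀, ∀ j, k₀ ≤ j → ¬ σ n j) :
    IsACOn (GC σ) Set.univ := by
  intro ε hε
  obtain ⟨N, hN⟩ := exists_pow_lt_of_lt_one (show (0:ℝ) < 3/8 * ε by linarith)
    (by norm_num : (1:ℝ)/4 < 1)
  choose k₀f hk₀ using hgood
  set Λ : ℝ := ∑ n ∈ Finset.range N, ((1/4:ℝ)^n * 3^(k₀f n) * 2^(n+1)) with hΛdef
  have hΛ0 : 0 ≤ Λ := Finset.sum_nonneg (fun n _ => by positivity)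
  refine ⟨ε/(2*(Λ+1)), by positivity, ?_⟩
  intro k a b hseq hW
  obtain ⟨-, -, hab, hba⟩ := hseq
  have hab' : ∀ i ≤ k, ((a i : ℝ)) ≤ b i := fun i hi => hab i hi
  have hba' : ∀ i < k, ((b i : ℝ)) ≤ a (i+1) := fun i hi => hba i hi
  set W := ∑ i ∈ Finset.range (k+1), ((b i : ℝ) - (a i : ℝ)) with hWdef
  have hW0 : 0 ≤ W := Finset.sum_nonneg (fun i hi => by
    have := hab' i (by simpa [Finset.mem_range, Nat.lt_succ_iff] using hi); linarith)
  -- replace abs by the difference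
  have habs : ∀ i ∈ Finset.range (k+1), |GC σ (b i) - GC σ (a i)|
      = GC σ (b i) - GC σ (a i) := by
    intro i hi
    have h1 : GC σ (a i) ≤ GC σ (b i) :=
      Gfun_mono σ (hab' i (by simpa [Finset.mem_range, Nat.lt_succ_iff] using hi))
    exact abs_of_nonneg (by linarith)
  rw [Finset.sum_congr rfl habs]
  -- swap the sums
  have hsub : ∀ i, Summable (fun m => rowf (σ m) m ((b i : ℝ)) - rowf (σ m) m ((a i : ℝ))) :=
    fun i => (summable_rowf σ (b i)).sub (summable_rowf σ (a i))
  have hswap : ∑ i ∈ Finset.range (k+1), (GC σ (b i) - GC σ (a i))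
      = ∑' m, ∑ i ∈ Finset.range (k+1),
        (rowf (σ m) m ((b i : ℝ)) - rowf (σ m) m ((a i : ℝ))) := by
    rw [Finset.sum_congr rfl (fun i _ => GC_sub_eq σ (a i) (b i))]
    exact (Summable.tsum_finsetSum (fun i _ => hsub i)).symm
  rw [hswap]
  set S : ℕ → ℝ := fun m => ∑ i ∈ Finset.range (k+1),
    (rowf (σ m) m ((b i : ℝ)) - rowf (σ m) m ((a i : ℝ))) with hSdef
  have hS0 : ∀ m, 0 ≤ S m := by
    intro m
    apply Finset.sum_nonneg
    intro i hi
    have := rowf_mono (σ m) m (hab' i (by simpa [Finset.mem_range, Nat.lt_succ_iff] using hi))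
    linarith
  have hSpow : ∀ m, S m ≤ (1/4)^m := by
    intro m
    have h1 := sum_incr_le (rowf (σ m) m) (rowf_mono (σ m) m) k
      (fun i => ((a i : ℝ))) (fun i => ((b i : ℝ))) hab' hba'
    have h2 := rowf_le (σ m) m ((b k : ℝ))
    have h3 := rowf_nonneg (σ m) m ((a 0 : ℝ))
    exact h1.trans (by linarith)
  have hSsum : Summable S := Summable.of_nonneg_of_le hS0 hSpow
    (summable_geometric_of_lt_one (by norm_num) (by norm_num))
  have hSlip : ∀ m, S m ≤ ((1/4:ℝ)^m * 3^(k₀f m) * 2^(m+1)) * W := by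
    intro m
    rw [hSdef, hWdef, Finset.mul_sum]
    apply Finset.sum_le_sum
    intro i hi
    have h1 := rowf_lip (σ m) m (k₀f m) (hk₀ m) ((a i : ℝ)) ((b i : ℝ))
    have h2 : |((b i : ℝ)) - ((a i : ℝ))| = (b i : ℝ) - (a i : ℝ) :=
      abs_of_nonneg (by have := hab' i (by simpa [Finset.mem_range, Nat.lt_succ_iff] using hi); linarith)
    rw [h2] at h1
    calc rowf (σ m) m ((b i:ℝ)) - rowf (σ m) m ((a i:ℝ))
        ≤ |rowf (σ m) m ((b i:ℝ)) - rowf (σ m) m ((a i:ℝ))| := le_abs_self _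
      _ ≤ _ := h1
  -- split the tsum
  rw [← Summable.sum_add_tsum_nat_add N hSsum]
  have hpart1 : ∑ m ∈ Finset.range N, S m ≤ Λ * W := by
    rw [hΛdef, Finset.sum_mul]
    exact Finset.sum_le_sum (fun m _ => hSlip m)
  have hδW : Λ * W < ε / 2 := by
    have h1 : Λ * W ≤ Λ * (ε/(2*(Λ+1))) :=
      mul_le_mul_of_nonneg_left (le_of_lt hW) hΛ0
    have h2 : Λ * (ε/(2*(Λ+1))) < (Λ+1) * (ε/(2*(Λ+1))) := by
      apply mul_lt_mul_of_pos_right (by linarith) (by positivity)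
    have h3 : (Λ+1) * (ε/(2*(Λ+1))) = ε/2 := by
      field_simp
    linarith
  have hpart2 : ∑' (j : ℕ), S (j + N) ≤ (4/3) * (1/4)^N := by
    have h1 : ∑' (j : ℕ), S (j + N) ≤ ∑' (j : ℕ), ((1/4:ℝ)^(j+N)) := by
      apply Summable.tsum_le_tsum (fun j => hSpow (j+N)) ((summable_nat_add_iff N).mpr hSsum)
      · have : Summable (fun j : ℕ => ((1/4:ℝ)^j * (1/4)^N)) :=
          (summable_geometric_of_lt_one (by norm_num) (by norm_num)).mul_right _
        apply this.congr
        intro j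
        rw [← pow_add]
    have h2 : ∑' (j : ℕ), ((1/4:ℝ)^(j+N)) = (4/3) * (1/4)^N := by
      have : ∀ j : ℕ, ((1/4:ℝ)^(j+N)) = (1/4)^j * (1/4)^N := fun j => pow_add _ _ _
      rw [tsum_congr this, tsum_mul_right,
        tsum_geometric_of_lt_one (by norm_num) (by norm_num)]
      norm_num
    linarith
  have htail : (4/3 : ℝ) * (1/4)^N < ε / 2 := by nlinarith
  linarith

/-- the bad case: some row refines infinitely often, so `GC σ` is not absolutely continuous -/
lemma not_isACOn_GC (σ : ℕ → ℕ → Prop) (n : ℕ) (hbad : ∀ K, ∃ k, K ≤ k ∧ σ n k) :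
    ¬ IsACOn (GC σ) Set.univ := by
  intro hAC
  obtain ⟨δ, hδ, hsys⟩ := hAC ((1/4)^n) (by positivity)
  obtain ⟨k, hk⟩ := wprod_small (σ n) hbad (show (0:ℝ) < δ * 2^(n+1) by positivity)
  set ρ : ℕ → Prop := σ n with hρdef
  set l := CellList ρ k with hldef
  have hlen : 0 < l.length := List.length_pos_iff.mpr (cells_ne_nil ρ k)
  set ψ : ℝ → ℝ := fun u => lep n + u * (1/2)^(n+1) with hψdef
  have hψmem : ∀ u, 0 ≤ u → u ≤ 1 → ψ u ∈ unitInterval := by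
    intro u h0 h1
    have hp1 : ((1:ℝ)/2)^n ≤ 1 := pow_le_one₀ (by norm_num) (by norm_num)
    have hp2 : (0:ℝ) < (1/2)^(n+1) := by positivity
    have hp3 : ((1:ℝ)/2)^(n+1) = (1/2)^n * (1/2) := pow_succ _ _
    constructor
    · simp only [hψdef, lep]
      nlinarith
    · simp only [hψdef, lep]
      nlinarith
  have hgd : ∀ i, 0 ≤ (l.getD i ((1:ℝ),(1:ℝ))).1 ∧ (l.getD i ((1:ℝ),(1:ℝ))).1 ≤ (l.getD i ((1:ℝ),(1:ℝ))).2
      ∧ (l.getD i ((1:ℝ),(1:ℝ))).2 ≤ 1 := by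
    intro i
    by_cases h : i < l.length
    · rw [List.getD_eq_get l _ ⟨i, h⟩]
      exact cells_mem ρ k _ (List.get_mem l _)
    · rw [List.getD_eq_default l _ (by omega)]
      norm_num
  set A : ℕ → unitInterval := fun i => ⟨ψ (l.getD i ((1:ℝ),(1:ℝ))).1,
    hψmem _ (hgd i).1 ((hgd i).2.1.trans (hgd i).2.2)⟩ with hAdef
  set B : ℕ → unitInterval := fun i => ⟨ψ (l.getD i ((1:ℝ),(1:ℝ))).2,
    hψmem _ ((hgd i).1.trans (hgd i).2.1) (hgd i).2.2⟩ with hBdef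
  have hψmono : ∀ u v : ℝ, u ≤ v → ψ u ≤ ψ v := by
    intro u v huv
    simp only [hψdef]
    nlinarith [pow_pos (show (0:ℝ) < 1/2 by norm_num) (n+1)]
  have hpair : ∀ i j, i < j → j < l.length →
      (l.getD i ((1:ℝ),(1:ℝ))).2 ≤ (l.getD j ((1:ℝ),(1:ℝ))).1 := by
    intro i j hij hj
    have hi : i < l.length := by omega
    rw [List.getD_eq_get l _ ⟨i, hi⟩, List.getD_eq_get l _ ⟨j, hj⟩]
    exact (List.pairwise_iff_get.mp (cells_pairwise ρ k)) ⟨i, hi⟩ ⟨j, hj⟩ hij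
  have hseq : SeqOn Set.univ (l.length - 1) A B := by
    refine ⟨fun _ _ => Set.mem_univ _, fun _ _ => Set.mem_univ _, ?_, ?_⟩
    · intro i _
      exact Subtype.coe_le_coe.mp (hψmono _ _ (hgd i).2.1)
    · intro i hi
      apply Subtype.coe_le_coe.mp
      exact hψmono _ _ (hpair i (i+1) (by omega) (by omega))
  have hrange : (l.length - 1) + 1 = l.length := by omega
  -- total width
  have hwidth : ∑ i ∈ Finset.range ((l.length - 1) + 1), ((B i : ℝ) - (A i : ℝ)) < δ := by
    rw [hrange]
    have e1 : ∀ i ∈ Finset.range l.length, ((B i : ℝ) - (A i : ℝ))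
        = (1/2)^(n+1) * ((l.getD i ((1:ℝ),(1:ℝ))).2 - (l.getD i ((1:ℝ),(1:ℝ))).1) := by
      intro i _
      simp only [hAdef, hBdef, hψdef]
      ring
    rw [Finset.sum_congr rfl e1, ← Finset.mul_sum]
    have e2 : ∑ i ∈ Finset.range l.length,
        ((l.getD i ((1:ℝ),(1:ℝ))).2 - (l.getD i ((1:ℝ),(1:ℝ))).1) = wprod ρ k := by
      show _ = ∏ j ∈ Finset.range k, (2 / cval (ρ j))
      rw [← cells_width ρ k, list_sum_eq_range ((1:ℝ),(1:ℝ)) l (fun pr => pr.2 - pr.1)]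
    rw [e2]
    have h3 : ((1:ℝ)/2)^(n+1) * 2^(n+1) = 1 := by
      rw [div_pow, one_pow]; field_simp
    calc ((1:ℝ)/2)^(n+1) * wprod ρ k < (1/2)^(n+1) * (δ * 2^(n+1)) := by
          apply mul_lt_mul_of_pos_left hk (by positivity)
      _ = δ * ((1/2)^(n+1) * 2^(n+1)) := by ring
      _ = δ := by rw [h3, mul_one]
  -- total increment
  have hincr : (1/4:ℝ)^n ≤ ∑ i ∈ Finset.range ((l.length - 1) + 1),
      |GC σ (B i) - GC σ (A i)| := by
    rw [hrange]
    have e0 : ∀ i ∈ Finset.range l.length, |GC σ (B i) - GC σ (A i)|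
        = GC σ (B i) - GC σ (A i) := by
      intro i _
      have : GC σ (A i) ≤ GC σ (B i) := Gfun_mono σ (hψmono _ _ (hgd i).2.1)
      exact abs_of_nonneg (by linarith)
    rw [Finset.sum_congr rfl e0]
    have e1 : ∀ i ∈ Finset.range l.length,
        rowf (σ n) n ((B i : ℝ)) - rowf (σ n) n ((A i : ℝ)) ≤ GC σ (B i) - GC σ (A i) := by
      intro i _
      rw [GC_sub_eq σ (A i) (B i)]
      apply Summable.le_tsum ((summable_rowf σ ((B i : ℝ))).sub (summable_rowf σ ((A i : ℝ)))) n
      intro m _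
      have := rowf_mono (σ m) m (hψmono _ _ (hgd i).2.1)
      linarith
    have e2 : ∑ i ∈ Finset.range l.length,
        (rowf (σ n) n ((B i : ℝ)) - rowf (σ n) n ((A i : ℝ))) = (1/4)^n := by
      have hval : ∀ u : ℝ, rowf (σ n) n (ψ u) = (1/4)^n * P ρ u := by
        intro u
        simp only [hψdef]
        rw [rowf_psi (σ n) n u]
      have e3 : ∀ i ∈ Finset.range l.length,
          rowf (σ n) n ((B i : ℝ)) - rowf (σ n) n ((A i : ℝ))
          = (1/4)^n * (P ρ (l.getD i ((1:ℝ),(1:ℝ))).2 - P ρ (l.getD i ((1:ℝ),(1:ℝ))).1) := by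
        intro i _
        rw [show ((B i : ℝ)) = ψ (l.getD i ((1:ℝ),(1:ℝ))).2 from rfl,
          show ((A i : ℝ)) = ψ (l.getD i ((1:ℝ),(1:ℝ))).1 from rfl, hval, hval]
        ring
      rw [Finset.sum_congr rfl e3, ← Finset.mul_sum]
      have e4 : ∑ i ∈ Finset.range l.length,
          (P ρ (l.getD i ((1:ℝ),(1:ℝ))).2 - P ρ (l.getD i ((1:ℝ),(1:ℝ))).1) = 1 := by
        calc ∑ i ∈ Finset.range l.length,
            (P ρ (l.getD i ((1:ℝ),(1:ℝ))).2 - P ρ (l.getD i ((1:ℝ),(1:ℝ))).1)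
            = ((CellList ρ k).map (fun pr => P ρ pr.2 - P ρ pr.1)).sum :=
              (list_sum_eq_range ((1:ℝ),(1:ℝ)) l (fun pr => P ρ pr.2 - P ρ pr.1)).symm
          _ = 1 := cells_val ρ k
      rw [e4, mul_one]
    calc (1/4:ℝ)^n = ∑ i ∈ Finset.range l.length,
          (rowf (σ n) n ((B i : ℝ)) - rowf (σ n) n ((A i : ℝ))) := e2.symm
      _ ≤ _ := Finset.sum_le_sum e1
  have := hsys (l.length - 1) A B hseq hwidth
  linarith

set_option maxHeartbeats 1000000 in
/-- distance bound between two gadget functions whose patterns agree on an initial block -/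
lemma GC_dist_le (σ σ' : ℕ → ℕ → Prop) (N K : ℕ)
    (h : ∀ n, n < N → ∀ j, j < K → (σ n j ↔ σ' n j)) :
    dist (GC σ) (GC σ') ≤ 8 * (1/2)^K + 2 * (1/4)^N := by
  rw [ContinuousMap.dist_le (by positivity)]
  intro t
  rw [Real.dist_eq]
  have hsub : Summable (fun m => rowf (σ m) m ((t:ℝ)) - rowf (σ' m) m ((t:ℝ))) :=
    (summable_rowf σ (t:ℝ)).sub (summable_rowf σ' (t:ℝ))
  have e1 : GC σ t - GC σ' t = ∑' m, (rowf (σ m) m ((t:ℝ)) - rowf (σ' m) m ((t:ℝ))) :=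
    (Summable.tsum_sub (summable_rowf σ (t:ℝ)) (summable_rowf σ' (t:ℝ))).symm
  rw [e1]
  have habs_sum : Summable (fun m => |rowf (σ m) m ((t:ℝ)) - rowf (σ' m) m ((t:ℝ))|) := by
    apply Summable.of_nonneg_of_le (fun m => abs_nonneg _) _
      (summable_geometric_of_lt_one (r := 1/4) (by norm_num) (by norm_num))
    intro m
    rw [abs_sub_le_iff]
    constructor
    · have := rowf_le (σ m) m ((t:ℝ)); have := rowf_nonneg (σ' m) m ((t:ℝ)); linarith
    · have := rowf_le (σ' m) m ((t:ℝ)); have := rowf_nonneg (σ m) m ((t:ℝ)); linarith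
  have h2 : |∑' m, (rowf (σ m) m ((t:ℝ)) - rowf (σ' m) m ((t:ℝ)))|
      ≤ ∑' m, |rowf (σ m) m ((t:ℝ)) - rowf (σ' m) m ((t:ℝ))| := by
    simpa [Real.norm_eq_abs] using norm_tsum_le_tsum_norm
      (f := fun m => rowf (σ m) m ((t:ℝ)) - rowf (σ' m) m ((t:ℝ)))
      (by simpa [Real.norm_eq_abs] using habs_sum)
  refine h2.trans ?_
  rw [← Summable.sum_add_tsum_nat_add N habs_sum]
  have hhead : ∑ m ∈ Finset.range N, |rowf (σ m) m ((t:ℝ)) - rowf (σ' m) m ((t:ℝ))|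
      ≤ 8 * (1/2)^K := by
    have hb : ∀ m ∈ Finset.range N, |rowf (σ m) m ((t:ℝ)) - rowf (σ' m) m ((t:ℝ))|
        ≤ (1/4)^m * (4 * (1/2)^K) := by
      intro m hm
      have hm' : m < N := Finset.mem_range.mp hm
      have heq : ∀ j, j < K → (σ m j ↔ σ' m j) := fun j hj => h m hm' j hj
      have := rowf_dist (σ m) (σ' m) m K (fun j hj => heq j hj) ((t:ℝ))
      -- rowf_dist needs same n but different patterns only
      exact this
    calc ∑ m ∈ Finset.range N, |rowf (σ m) m ((t:ℝ)) - rowf (σ' m) m ((t:ℝ))|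
        ≤ ∑ m ∈ Finset.range N, (1/4:ℝ)^m * (4 * (1/2)^K) := Finset.sum_le_sum hb
      _ = (∑ m ∈ Finset.range N, (1/4:ℝ)^m) * (4 * (1/2)^K) := by rw [Finset.sum_mul]
      _ ≤ 2 * (4 * (1/2)^K) := by
          have h1 : ∑ m ∈ Finset.range N, ((1:ℝ)/4)^m ≤ 2 := by
            have := Finset.sum_le_sum (s := Finset.range N)
              (fun m (_ : m ∈ Finset.range N) => pow_le_pow_left₀ (by norm_num)
                (show (1:ℝ)/4 ≤ 1/2 by norm_num) m)
            exact le_trans this (sum_geometric_two_le N)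
          nlinarith [pow_pos (show (0:ℝ) < 1/2 by norm_num) K]
      _ ≤ 8 * (1/2)^K := by nlinarith [pow_pos (show (0:ℝ) < 1/2 by norm_num) K]
  have htail : ∑' (j : ℕ), |rowf (σ (j+N)) (j+N) ((t:ℝ)) - rowf (σ' (j+N)) (j+N) ((t:ℝ))|
      ≤ 2 * (1/4)^N := by
    have hb : ∀ j : ℕ, |rowf (σ (j+N)) (j+N) ((t:ℝ)) - rowf (σ' (j+N)) (j+N) ((t:ℝ))|
        ≤ (1/4:ℝ)^j * (1/4)^N := by
      intro j
      rw [← pow_add]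
      rw [abs_sub_le_iff]
      constructor
      · have := rowf_le (σ (j+N)) (j+N) ((t:ℝ)); have := rowf_nonneg (σ' (j+N)) (j+N) ((t:ℝ)); linarith
      · have := rowf_le (σ' (j+N)) (j+N) ((t:ℝ)); have := rowf_nonneg (σ (j+N)) (j+N) ((t:ℝ)); linarith
    have h1 : ∑' (j:ℕ), |rowf (σ (j+N)) (j+N) ((t:ℝ)) - rowf (σ' (j+N)) (j+N) ((t:ℝ))|
        ≤ ∑' (j:ℕ), ((1/4:ℝ)^j * (1/4)^N) := by
      apply Summable.tsum_le_tsum hb ((summable_nat_add_iff N).mpr habs_sum)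
      exact (summable_geometric_of_lt_one (by norm_num) (by norm_num)).mul_right _
    rw [tsum_mul_right, tsum_geometric_of_lt_one (by norm_num) (by norm_num)] at h1
    have : ((1:ℝ) - 1/4)⁻¹ * (1/4)^N ≤ 2 * (1/4)^N := by
      nlinarith [pow_pos (show (0:ℝ) < 1/4 by norm_num) N]
    linarith
  linarith

/-- continuity of the reduction -/
lemma GC_comp_continuous (D : ℕ → ℕ → Set (ℕ → ℕ)) :
    Continuous (fun x : ℕ → ℕ => GC (fun n k => rho D n x k)) := by
  rw [continuous_iff_continuousAt]
  intro x
  rw [ContinuousAt, Metric.tendsto_nhds]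
  intro ε hε
  obtain ⟨N, hN⟩ := exists_pow_lt_of_lt_one (show (0:ℝ) < ε/4 by linarith)
    (by norm_num : (1:ℝ)/4 < 1)
  obtain ⟨K, hK⟩ := exists_pow_lt_of_lt_one (show (0:ℝ) < ε/16 by linarith)
    (by norm_num : (1:ℝ)/2 < 1)
  have hV : {x' : ℕ → ℕ | ∀ j, j ≤ K → x' j = x j} ∈ 𝓝 x := by
    have : {x' : ℕ → ℕ | ∀ j, j ≤ K → x' j = x j}
        = ⋂ (j : Fin (K+1)), {x' : ℕ → ℕ | x' j = x j} := by
      ext x'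
      simp only [Set.mem_setOf_eq, Set.mem_iInter]
      constructor
      · intro hx' j; exact hx' j (by omega)
      · intro hx' j hj; exact hx' ⟨j, by omega⟩
    rw [this]
    apply IsOpen.mem_nhds
    · apply isOpen_iInter_of_finite
      intro j
      have : {x' : ℕ → ℕ | x' (j:ℕ) = x (j:ℕ)}
          = (fun x' : ℕ → ℕ => x' (j:ℕ)) ⁻¹' {x (j:ℕ)} := rfl
      rw [this]
      exact (continuous_apply ((j:ℕ))).isOpen_preimage _ (isOpen_discrete _)
    · exact Set.mem_iInter.mpr (fun j => rfl)
  filter_upwards [hV] with x' hx'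
  have hagree : ∀ n, n < N → ∀ j, j < K → (rho D n x' j ↔ rho D n x j) := by
    intro n _ j hj
    exact rho_congr D n j x' x (fun i hi => (hx' i (by omega)).symm ▸ rfl)
  have := GC_dist_le (fun n k => rho D n x' k) (fun n k => rho D n x k) N K hagree
  have h1 : 8*(1/2:ℝ)^K + 2*(1/4)^N < ε := by nlinarith
  calc dist (GC fun n k => rho D n x' k) (GC fun n k => rho D n x k)
      ≤ 8*(1/2:ℝ)^K + 2*(1/4)^N := this
    _ < ε := h1

/-! ## the upper bound: AC is Pi^0_3 -/

/-- basic closed building blocks -/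
def Dset (n m : ℕ) : Set CI :=
  {F | ∀ (k : ℕ) (a b : ℕ → unitInterval), SeqOn Set.univ k a b →
    (∑ i ∈ Finset.range (k+1), ((b i : ℝ) - (a i : ℝ))) ≤ 1/((m:ℝ)+1) →
    ∑ i ∈ Finset.range (k+1), |F (b i) - F (a i)| ≤ 1/((n:ℝ)+1)}

lemma isClosed_Dset (n m : ℕ) : IsClosed (Dset n m) := by
  have : Dset n m = ⋂ (k : ℕ), ⋂ (a : ℕ → unitInterval), ⋂ (b : ℕ → unitInterval),
      ⋂ (_ : SeqOn Set.univ k a b),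
      ⋂ (_ : (∑ i ∈ Finset.range (k+1), ((b i : ℝ) - (a i : ℝ))) ≤ 1/((m:ℝ)+1)),
      {F : CI | ∑ i ∈ Finset.range (k+1), |F (b i) - F (a i)| ≤ 1/((n:ℝ)+1)} := by
    ext F
    simp only [Dset, Set.mem_setOf_eq, Set.mem_iInter]
  rw [this]
  refine isClosed_iInter (fun k => isClosed_iInter (fun a => isClosed_iInter (fun b =>
    isClosed_iInter (fun _ => isClosed_iInter (fun _ => ?_)))))
  apply isClosed_le _ continuous_const
  apply continuous_finset_sum
  intro i _
  exact ((continuous_eval_const (b i)).sub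
    (continuous_eval_const (a i))).abs

lemma AC_eq_iInter : {F : CI | IsACOn F Set.univ} = ⋂ n, ⋃ m, Dset n m := by
  ext F
  simp only [Set.mem_setOf_eq, Set.mem_iInter, Set.mem_iUnion]
  constructor
  · intro hF n
    have hε : (0:ℝ) < 1/((n:ℝ)+1) := by positivity
    obtain ⟨δ, hδ, hsys⟩ := hF _ hε
    obtain ⟨m, hm⟩ := exists_nat_one_div_lt hδ
    refine ⟨m, ?_⟩
    intro k a b hseq hsum
    exact le_of_lt (hsys k a b hseq (lt_of_le_of_lt hsum hm))
  · intro hF ε hε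
    obtain ⟨n, hn⟩ := exists_nat_one_div_lt hε
    obtain ⟨m, hm⟩ := hF n
    refine ⟨1/((m:ℝ)+1), by positivity, ?_⟩
    intro k a b hseq hsum
    exact lt_of_le_of_lt (hm k a b hseq (le_of_lt hsum)) hn

end ACgadget

open ACgadget in
/-- The set of absolutely continuous functions is `Π⁰₃`-complete: it is a countable
intersection of Fσ subsets of `C(I)`, and every countable intersection of Fσ subsets of Baire
space continuously reduces to it. -/
theorem absolutelyContinuous_pi03_complete :
    IsPi03 {F : CI | IsACOn F Set.univ} ∧
    ∀ B : Set (ℕ → ℕ), IsPi03 B →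
      ∃ g : (ℕ → ℕ) → CI, Continuous g ∧ g ⁻¹' {F : CI | IsACOn F Set.univ} = B := by
  constructor
  · exact ⟨fun n => ⋃ m, Dset n m, fun n => ⟨Dset n, isClosed_Dset n, rfl⟩, AC_eq_iInter⟩
  · intro B hB
    obtain ⟨Cfam, hCfam, hBeq⟩ := hB
    choose CC hCCcl hCCeq using hCfam
    set D : ℕ → ℕ → Set (ℕ → ℕ) := fun n m => ⋃ j ∈ Finset.range (m+1), CC n j with hDdef
    have hDcl : ∀ n m, IsClosed (D n m) := by
      intro n m
      apply Set.Finite.isClosed_biUnion (Finset.finite_toSet _)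
      intro j _
      exact hCCcl n j
    have hDmono : ∀ n m, D n m ⊆ D n (m+1) := by
      intro n m x hx
      simp only [hDdef, Set.mem_iUnion, Finset.mem_range] at hx ⊢
      obtain ⟨j, hj, hxj⟩ := hx
      exact ⟨j, by omega, hxj⟩
    have hDmem : ∀ n x, x ∈ Cfam n ↔ ∃ m, x ∈ D n m := by
      intro n x
      rw [hCCeq n]
      simp only [Set.mem_iUnion, hDdef, Finset.mem_range]
      constructor
      · rintro ⟨j, hj⟩; exact ⟨j, j, by omega, hj⟩
      · rintro ⟨m, j, _, hj⟩; exact ⟨j, hj⟩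
    refine ⟨fun x => GC (fun n k => rho D n x k), GC_comp_continuous D, ?_⟩
    ext x
    simp only [Set.mem_preimage, Set.mem_setOf_eq]
    constructor
    · intro hAC
      by_contra hxB
      have : ∃ n, x ∉ Cfam n := by
        by_contra hall
        push_neg at hall
        exact hxB (hBeq ▸ Set.mem_iInter.mpr hall)
      obtain ⟨n, hn⟩ := this
      have hbad : ∀ m, x ∉ D n m := by
        intro m hm
        exact hn ((hDmem n x).mpr ⟨m, hm⟩)
      exact not_isACOn_GC (fun n k => rho D n x k) n
        (rho_infinitely_true D hDcl n x hbad) hAC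
    · intro hxB
      apply isACOn_GC
      intro n
      have hx : x ∈ Cfam n := by
        have : x ∈ ⋂ n, Cfam n := by rw [← hBeq]; exact hxB
        exact Set.mem_iInter.mp this n
      obtain ⟨m₀, hm₀⟩ := (hDmem n x).mp hx
      exact rho_eventually_false D hDmono n x m₀ hm₀
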